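/- Fix 0 < ε < α and define the modified Huber function φ : ℝ → ℝ by φ(t) = ((t+ε)² − ε²)/(2α) if 0 ≤ t ≤ α − ε, φ(t) = ((t−ε)² − ε²)/(2α) if −(α−ε) ≤ t ≤ 0, and φ(t) = |t| + ε − (ε² + α²)/(2α) if |t| > α − ε. Then: (i) φ is convex on ℝ; (ii) the convex subdifferential of φ at 0 equals the interval [−ε/α, ε/α]; (iii) φ is pointwise quadratically supportable at 0 on bounded sets; and (iv) φ is not strongly convex on ℝ, i.e., there is no μ > 0 such that t ↦ φ(t) − (μ/2)t² is convex on ℝ. -/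

import Mathlib

/-- The modified Huber function of the paper (equation (1.4)):
`φ(t) = ((t+ε)² - ε²)/(2α)` for `0 ≤ t ≤ α - ε`,
`φ(t) = ((t-ε)² - ε²)/(2α)` for `-(α-ε) ≤ t ≤ 0`, and
`φ(t) = |t| + ε - (ε² + α²)/(2α)` for `|t| > α - ε`. -/
noncomputable def modifiedHuber (α ε : ℝ) (t : ℝ) : ℝ :=
  if 0 ≤ t ∧ t ≤ α - ε then ((t + ε) ^ 2 - ε ^ 2) / (2 * α)
  else if -(α - ε) ≤ t ∧ t ≤ 0 then ((t - ε) ^ 2 - ε ^ 2) / (2 * α)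
  else |t| + ε - (ε ^ 2 + α ^ 2) / (2 * α)


open Set

noncomputable def hubAux (α β : ℝ) (t : ℝ) : ℝ :=
  if |t| ≤ β then t ^ 2 / (2 * α) else β * |t| / α - β ^ 2 / (2 * α)

lemma hubAux_hasDerivAt (α β : ℝ) (hα : 0 < α) (hβ : 0 < β) (t : ℝ) :
    HasDerivAt (hubAux α β) (max (min t β) (-β) / α) t := by
  have hq : ∀ s : ℝ, HasDerivAt (fun u : ℝ => u ^ 2 / (2 * α)) (s / α) s := by
    intro s
    have h := (hasDerivAt_pow 2 s).div_const (2 * α)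
    refine h.congr_deriv ?_
    field_simp
    ring
  have hl : ∀ s : ℝ, HasDerivAt (fun u : ℝ => β * u / α - β ^ 2 / (2 * α)) (β / α) s := by
    intro s
    have h := (((hasDerivAt_id s).const_mul β).div_const α).sub_const (β ^ 2 / (2 * α))
    simpa using h
  have hl' : ∀ s : ℝ, HasDerivAt (fun u : ℝ => β * (-u) / α - β ^ 2 / (2 * α)) (-β / α) s := by
    intro s
    have h := (((hasDerivAt_id s).neg.const_mul β).div_const α).sub_const (β ^ 2 / (2 * α))
    refine h.congr_deriv ?_
    field_simp
  rcases lt_trichotomy t β with h1 | h1 | h1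
  · rcases lt_trichotomy (-β) t with h2 | h2 | h2
    · -- interior case
      have hmm : max (min t β) (-β) = t := by
        rw [min_eq_left h1.le, max_eq_left h2.le]
      rw [hmm]
      have hev : hubAux α β =ᶠ[nhds t] fun u : ℝ => u ^ 2 / (2 * α) := by
        filter_upwards [Ioo_mem_nhds h2 h1] with s hs
        simp [hubAux, abs_le.2 ⟨hs.1.le, hs.2.le⟩]
      exact hev.hasDerivAt_iff.2 (hq t)
    · -- t = -β
      subst h2
      have hmm : max (min (-β) β) (-β) = -β := by
        rw [min_eq_left (by linarith), max_self]
      rw [hmm]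
      have hIci : HasDerivWithinAt (hubAux α β) (-β / α) (Ici (-β)) (-β) := by
        refine ((hq (-β)).hasDerivWithinAt).congr_of_eventuallyEq ?_ ?_
        · filter_upwards [mem_nhdsWithin_of_mem_nhds
            (Iio_mem_nhds (by linarith : -β < β)), self_mem_nhdsWithin] with s hs1 hs2
          simp [hubAux, abs_le.2 ⟨Set.mem_Ici.1 hs2, (Set.mem_Iio.1 hs1).le⟩]
        · simp [hubAux, abs_neg, abs_of_pos hβ]
      have hIic : HasDerivWithinAt (hubAux α β) (-β / α) (Iic (-β)) (-β) := by
        refine ((hl' (-β)).hasDerivWithinAt).congr_of_eventuallyEq ?_ ?_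
        · filter_upwards [self_mem_nhdsWithin] with s hs
          rcases lt_or_eq_of_le (Set.mem_Iic.1 hs) with h | h
          · have hs0 : s < 0 := by linarith
            have : ¬ |s| ≤ β := by rw [abs_of_neg hs0]; push_neg; linarith
            rw [hubAux, if_neg this, abs_of_neg hs0]
          · rw [h]
            simp only [hubAux, abs_neg, abs_of_pos hβ, le_refl, if_pos]
            field_simp
            ring
        · simp only [hubAux, abs_neg, abs_of_pos hβ, le_refl, if_pos]
          field_simp
          ring
      have h := hIic.union hIci
      rw [Iic_union_Ici] at h
      exact hasDerivWithinAt_univ.1 h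
    · -- t < -β
      have hmm : max (min t β) (-β) = -β := by
        rw [min_eq_left h1.le, max_eq_right (by linarith)]
      rw [hmm]
      have hev : hubAux α β =ᶠ[nhds t] fun u : ℝ => β * (-u) / α - β ^ 2 / (2 * α) := by
        filter_upwards [Iio_mem_nhds h2] with s hs
        have hs' : s < -β := Set.mem_Iio.1 hs
        have hs0 : s < 0 := by linarith
        have : ¬ |s| ≤ β := by rw [abs_of_neg hs0]; push_neg; linarith
        rw [hubAux, if_neg this, abs_of_neg hs0]
      exact hev.hasDerivAt_iff.2 (hl' t)
  · -- t = β
    rw [h1]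
    have hmm : max (min β β) (-β) = β := by
      rw [min_self, max_eq_left (by linarith)]
    rw [hmm]
    have hIic : HasDerivWithinAt (hubAux α β) (β / α) (Iic β) β := by
      refine ((hq β).hasDerivWithinAt).congr_of_eventuallyEq ?_ ?_
      · filter_upwards [mem_nhdsWithin_of_mem_nhds
          (Ioi_mem_nhds (by linarith : -β < β)), self_mem_nhdsWithin] with s hs1 hs2
        simp [hubAux, abs_le.2 ⟨(Set.mem_Ioi.1 hs1).le, Set.mem_Iic.1 hs2⟩]
      · simp [hubAux, abs_of_pos hβ]
    have hIci : HasDerivWithinAt (hubAux α β) (β / α) (Ici β) β := by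
      refine ((hl β).hasDerivWithinAt).congr_of_eventuallyEq ?_ ?_
      · filter_upwards [self_mem_nhdsWithin] with s hs
        rcases lt_or_eq_of_le (Set.mem_Ici.1 hs) with h | h
        · have hs0 : 0 < s := by linarith
          have : ¬ |s| ≤ β := by rw [abs_of_pos hs0]; push_neg; linarith
          rw [hubAux, if_neg this, abs_of_pos hs0]
        · rw [← h]
          simp only [hubAux, abs_of_pos hβ, le_refl, if_pos]
          field_simp
          ring
      · simp only [hubAux, abs_of_pos hβ, le_refl, if_pos]
        field_simp
        ring
    have h := hIic.union hIci
    rw [Iic_union_Ici] at h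
    exact hasDerivWithinAt_univ.1 h
  · -- β < t
    have hmm : max (min t β) (-β) = β := by
      rw [min_eq_right h1.le, max_eq_left (by linarith)]
    rw [hmm]
    have hev : hubAux α β =ᶠ[nhds t] fun u : ℝ => β * u / α - β ^ 2 / (2 * α) := by
      filter_upwards [Ioi_mem_nhds h1] with s hs
      have hs' : β < s := Set.mem_Ioi.1 hs
      have hs0 : 0 < s := lt_trans hβ hs'
      have : ¬ |s| ≤ β := by rw [abs_of_pos hs0]; push_neg; exact hs'
      rw [hubAux, if_neg this, abs_of_pos hs0]
    exact hev.hasDerivAt_iff.2 (hl t)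

lemma hubAux_convexOn (α β : ℝ) (hα : 0 < α) (hβ : 0 < β) :
    ConvexOn ℝ univ (hubAux α β) := by
  have hd := hubAux_hasDerivAt α β hα hβ
  refine Monotone.convexOn_univ_of_deriv (fun t => (hd t).differentiableAt) ?_
  have hderiv : deriv (hubAux α β) = fun t => max (min t β) (-β) / α :=
    funext fun t => (hd t).deriv
  rw [hderiv]
  intro x y hxy
  have : max (min x β) (-β) ≤ max (min y β) (-β) :=
    max_le_max (min_le_min hxy le_rfl) le_rfl
  exact (div_le_div_iff_of_pos_right hα).2 this

lemma modifiedHuber_eq (α ε : ℝ) (hε : 0 < ε) (hεα : ε < α) (t : ℝ) :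
    modifiedHuber α ε t = ε / α * |t| + hubAux α (α - ε) t := by
  have hα : 0 < α := hε.trans hεα
  have hβ : 0 < α - ε := by linarith
  rcases lt_trichotomy t 0 with h0 | h0 | h0
  · -- t < 0
    rw [modifiedHuber, hubAux, if_neg (fun hh => absurd hh.1 (not_le.2 h0)), abs_of_neg h0]
    rcases le_or_gt (-(α - ε)) t with h1 | h1
    · rw [if_pos ⟨h1, h0.le⟩, if_pos (by linarith)]
      field_simp
      ring
    · rw [if_neg (fun hh => absurd hh.1 (not_le.2 h1)), if_neg (by push_neg; linarith)]
      field_simp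
      ring
  · subst h0
    rw [modifiedHuber, hubAux, if_pos ⟨le_refl 0, hβ.le⟩, if_pos (by simp [hβ.le])]
    norm_num
  · -- 0 < t
    rw [modifiedHuber, hubAux, abs_of_pos h0]
    rcases le_or_gt t (α - ε) with h1 | h1
    · rw [if_pos ⟨h0.le, h1⟩, if_pos h1]
      field_simp
      ring
    · rw [if_neg (fun hh => absurd hh.2 (not_le.2 h1)),
        if_neg (fun hh => absurd hh.2 (not_le.2 h0)), if_neg (not_le.2 h1)]
      field_simp
      ring

lemma modifiedHuber_zero (α ε : ℝ) (hε : 0 < ε) (hεα : ε < α) :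
    modifiedHuber α ε 0 = 0 := by
  rw [modifiedHuber, if_pos ⟨le_refl 0, by linarith⟩]
  norm_num

lemma modifiedHuber_outer (α ε : ℝ) (hε : 0 < ε) (hεα : ε < α) {t : ℝ} (ht : α - ε < t) :
    modifiedHuber α ε t = t + ε - (ε ^ 2 + α ^ 2) / (2 * α) := by
  have ht0 : 0 < t := by linarith
  rw [modifiedHuber, if_neg (fun hh => absurd hh.2 (not_le.2 ht)),
    if_neg (fun hh => absurd hh.2 (not_le.2 ht0)), abs_of_pos ht0]

lemma hubAux_nonneg (α β : ℝ) (hα : 0 < α) (hβ : 0 < β) (t : ℝ) : 0 ≤ hubAux α β t := by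
  rw [hubAux]
  split_ifs with h
  · positivity
  · push_neg at h
    have h2 : β ^ 2 / (2 * α) ≤ β * |t| / α := by
      rw [div_le_div_iff₀ (by positivity) hα]
      nlinarith [mul_pos (mul_pos hα hβ) (show 0 < 2 * |t| - β by nlinarith)]
    linarith [sq_nonneg β, div_pos (pow_pos hβ 2) (by positivity : (0:ℝ) < 2 * α)]

lemma hubAux_ge (α β : ℝ) (hα : 0 < α) (hβ : 0 < β) {R t : ℝ} (hR : 0 < R) (ht : |t| ≤ R) :
    min (1 / α) (β ^ 2 / (α * R ^ 2)) / 2 * t ^ 2 ≤ hubAux α β t := by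
  set μ := min (1 / α) (β ^ 2 / (α * R ^ 2)) with hμ
  have hμ0 : 0 < μ := lt_min (by positivity) (by positivity)
  rw [hubAux]
  split_ifs with h
  · have h1 : μ ≤ 1 / α := min_le_left _ _
    have h2 : 0 ≤ t ^ 2 := sq_nonneg t
    have : μ / 2 * t ^ 2 ≤ 1 / α / 2 * t ^ 2 := by nlinarith
    have e : 1 / α / 2 * t ^ 2 = t ^ 2 / (2 * α) := by ring
    linarith [this, e.ge, e.le]
  · push_neg at h
    have h2 : μ ≤ β ^ 2 / (α * R ^ 2) := min_le_right _ _
    have ht2 : t ^ 2 ≤ R ^ 2 := by nlinarith [abs_nonneg t, sq_abs t]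
    have step1 : μ / 2 * t ^ 2 ≤ β ^ 2 / (α * R ^ 2) / 2 * R ^ 2 := by
      nlinarith [sq_nonneg t]
    have e : β ^ 2 / (α * R ^ 2) / 2 * R ^ 2 = β ^ 2 / (2 * α) := by
      field_simp
    have step2 : β ^ 2 / (2 * α) ≤ β * |t| / α - β ^ 2 / (2 * α) := by
      have hh : β * β / α ≤ β * |t| / α :=
        (div_le_div_iff_of_pos_right hα).2 (by nlinarith)
      have e2 : β * β / α = β ^ 2 / (2 * α) + β ^ 2 / (2 * α) := by
        field_simp
        ring
      linarith
    rw [e] at step1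
    linarith [step1, step2]

/-- For `0 < ε < α`, the modified Huber function `φ` is (i) convex on `ℝ`;
(ii) its convex subdifferential at `0` is `[-ε/α, ε/α]`;
(iii) it is pointwise quadratically supportable at `0` on bounded sets; and
(iv) it is not strongly convex on `ℝ`. -/
theorem modifiedHuber_properties (α ε : ℝ) (hε : 0 < ε) (hεα : ε < α) :
    ConvexOn ℝ Set.univ (modifiedHuber α ε) ∧
    {v : ℝ | ∀ x : ℝ, modifiedHuber α ε 0 + v * (x - 0) ≤ modifiedHuber α ε x}
      = Set.Icc (-(ε / α)) (ε / α) ∧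
    (∀ V ∈ nhds (0 : ℝ), Bornology.IsBounded V → ∃ μ : ℝ, 0 < μ ∧
      ∀ v : ℝ, (∀ x : ℝ, modifiedHuber α ε 0 + v * (x - 0) ≤ modifiedHuber α ε x) →
        ∀ x ∈ V, modifiedHuber α ε 0 + v * (x - 0) + μ / 2 * ‖x - 0‖ ^ 2
          ≤ modifiedHuber α ε x) ∧
    ¬ ∃ μ : ℝ, 0 < μ ∧
        ConvexOn ℝ Set.univ (fun t : ℝ => modifiedHuber α ε t - μ / 2 * t ^ 2) := by
  have hα : 0 < α := hε.trans hεα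
  have hβ : 0 < α - ε := by linarith
  have hφ0 := modifiedHuber_zero α ε hε hεα
  have hrepr := modifiedHuber_eq α ε hε hεα
  have hconv : ConvexOn ℝ Set.univ (modifiedHuber α ε) := by
    have ha : ConvexOn ℝ univ fun t : ℝ => ε / α * |t| := by
      have h := (convexOn_univ_norm (E := ℝ)).smul (by positivity : (0:ℝ) ≤ ε / α)
      have e : (fun x : ℝ => (ε / α) • ‖x‖) = fun t : ℝ => ε / α * |t| := by
        funext t
        simp [Real.norm_eq_abs, smul_eq_mul]
      rwa [e] at h
    have h2 : modifiedHuber α ε = fun t => ε / α * |t| + hubAux α (α - ε) t :=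
      funext hrepr
    rw [h2]
    exact ha.add (hubAux_convexOn α (α - ε) hα hβ)
  have hsub : {v : ℝ | ∀ x : ℝ, modifiedHuber α ε 0 + v * (x - 0) ≤ modifiedHuber α ε x}
      = Set.Icc (-(ε / α)) (ε / α) := by
    ext v
    simp only [Set.mem_setOf_eq, hφ0, zero_add, sub_zero, Set.mem_Icc]
    constructor
    · intro h
      constructor
      · by_contra hv
        push_neg at hv
        have hεav : ε < α * (-v) := by
          have h' : ε / α < -v := by linarith
          calc ε = α * (ε / α) := by field_simp
          _ < α * (-v) := mul_lt_mul_of_pos_left h' hα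
        set m := min (α - ε) (α * (-v) - ε) with hm
        have hm0 : 0 < m := lt_min hβ (by linarith)
        have hm1 : m ≤ α - ε := min_le_left _ _
        have hm2 : m ≤ α * (-v) - ε := min_le_right _ _
        have hx := h (-m)
        have hφx : modifiedHuber α ε (-m) = ((-m - ε) ^ 2 - ε ^ 2) / (2 * α) := by
          rw [modifiedHuber, if_neg (fun hh => absurd hh.1 (not_le.2 (by linarith))),
            if_pos ⟨by linarith, by linarith⟩]
        rw [hφx, le_div_iff₀ (by positivity : (0:ℝ) < 2 * α)] at hx
        nlinarith [mul_pos hm0 (show 0 < 2 * (α * (-v)) - m - 2 * ε by nlinarith)]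
      · by_contra hv
        push_neg at hv
        have hεav : ε < α * v := by
          calc ε = α * (ε / α) := by field_simp
          _ < α * v := mul_lt_mul_of_pos_left hv hα
        set m := min (α - ε) (α * v - ε) with hm
        have hm0 : 0 < m := lt_min hβ (by linarith)
        have hm1 : m ≤ α - ε := min_le_left _ _
        have hm2 : m ≤ α * v - ε := min_le_right _ _
        have hx := h m
        have hφx : modifiedHuber α ε m = ((m + ε) ^ 2 - ε ^ 2) / (2 * α) := by
          rw [modifiedHuber, if_pos ⟨hm0.le, hm1⟩]
        rw [hφx, le_div_iff₀ (by positivity : (0:ℝ) < 2 * α)] at hx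
        nlinarith [mul_pos hm0 (show 0 < 2 * (α * v) - m - 2 * ε by nlinarith)]
    · rintro ⟨h1, h2⟩ x
      rw [hrepr x]
      have h3 : v * x ≤ ε / α * |x| := by
        calc v * x ≤ |v * x| := le_abs_self _
        _ = |v| * |x| := abs_mul v x
        _ ≤ ε / α * |x| := mul_le_mul_of_nonneg_right (abs_le.2 ⟨by linarith, h2⟩) (abs_nonneg x)
      linarith [hubAux_nonneg α (α - ε) hα hβ x]
  refine ⟨hconv, hsub, ?_, ?_⟩
  · intro V hV hVb
    obtain ⟨R, hR⟩ := hVb.subset_closedBall 0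
    set R' := max R 1 with hR'
    have hR'0 : (0:ℝ) < R' := lt_of_lt_of_le one_pos (le_max_right _ _)
    refine ⟨min (1 / α) ((α - ε) ^ 2 / (α * R' ^ 2)), lt_min (by positivity) (by positivity), ?_⟩
    intro v hv x hx
    have hvm : v ∈ Set.Icc (-(ε / α)) (ε / α) := by
      have hmem : v ∈ {v : ℝ | ∀ x : ℝ, modifiedHuber α ε 0 + v * (x - 0) ≤ modifiedHuber α ε x} := hv
      rwa [hsub] at hmem
    obtain ⟨hv1, hv2⟩ := hvm
    have hxR : |x| ≤ R' := by
      have h' := hR hx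
      rw [Metric.mem_closedBall, Real.dist_eq, sub_zero] at h'
      exact le_trans h' (le_max_left _ _)
    have hg := hubAux_ge α (α - ε) hα hβ hR'0 hxR
    simp only [hφ0, zero_add, sub_zero, Real.norm_eq_abs, sq_abs]
    rw [hrepr x]
    have h3 : v * x ≤ ε / α * |x| := by
      calc v * x ≤ |v * x| := le_abs_self _
      _ = |v| * |x| := abs_mul v x
      _ ≤ ε / α * |x| := mul_le_mul_of_nonneg_right (abs_le.2 ⟨by linarith, hv2⟩) (abs_nonneg x)
    linarith [hg]
  · rintro ⟨μ, hμ, hg⟩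
    have hv := hg.2 (Set.mem_univ ((α - ε) + 1)) (Set.mem_univ ((α - ε) + 3))
      (by norm_num : (0:ℝ) ≤ 1/2) (by norm_num : (0:ℝ) ≤ 1/2) (by norm_num)
    simp only [smul_eq_mul] at hv
    have e1 : (1/2 : ℝ) * ((α - ε) + 1) + 1/2 * ((α - ε) + 3) = (α - ε) + 2 := by ring
    rw [e1] at hv
    rw [modifiedHuber_outer α ε hε hεα (by linarith : α - ε < (α - ε) + 1),
      modifiedHuber_outer α ε hε hεα (by linarith : α - ε < (α - ε) + 2),
      modifiedHuber_outer α ε hε hεα (by linarith : α - ε < (α - ε) + 3)] at hv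
    nlinarith [hv, hμ]
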